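/- Let x, y, z ∈ ℂ satisfy |xy − z| ≤ |z| and |xz − y| ≤ |y|. Then |x| ≤ 2 or y = z = 0. -/

import Mathlib

/-- If `x, y, z ∈ ℂ` satisfy `|xy − z| ≤ |z|` and `|xz − y| ≤ |y|`, then
`|x| ≤ 2` or `y = z = 0`. -/
theorem fork_lemma_algebraic (x y z : ℂ)
    (h1 : ‖x * y - z‖ ≤ ‖z‖)
    (h2 : ‖x * z - y‖ ≤ ‖y‖) :
    ‖x‖ ≤ 2 ∨ (y = 0 ∧ z = 0) := by
  have k1 : ‖x‖ * ‖y‖ ≤ 2 * ‖z‖ := by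
    have := norm_add_le (x * y - z) z
    rw [sub_add_cancel] at this
    rw [norm_mul] at this; linarith
  have k2 : ‖x‖ * ‖z‖ ≤ 2 * ‖y‖ := by
    have := norm_add_le (x * z - y) y
    rw [sub_add_cancel] at this
    rw [norm_mul] at this; linarith
  by_cases hy : y = 0
  · subst hy
    simp only [norm_zero] at h2
    have hxz : x * z = 0 := by
      have := norm_nonneg (x * z - 0)
      have : ‖x * z - 0‖ = 0 := le_antisymm h2 this
      simpa using this
    rcases mul_eq_zero.mp hxz with hx | hz
    · left; simp [hx]
    · right; exact ⟨rfl, hz⟩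
  · by_cases hz : z = 0
    · subst hz
      simp only [norm_zero] at h1
      have hxy : x * y = 0 := by
        have := norm_nonneg (x * y - 0)
        have : ‖x * y - 0‖ = 0 := le_antisymm h1 this
        simpa using this
      rcases mul_eq_zero.mp hxy with hx | hy'
      · left; simp [hx]
      · exact absurd hy' hy
    · left
      have hy' : 0 < ‖y‖ := norm_pos_iff.mpr hy
      have hz' : 0 < ‖z‖ := norm_pos_iff.mpr hz
      nlinarith [norm_nonneg x]
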